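/- Let $X, Z \in M_m(\mathbb{R})$ with $\mathrm{tr}(X) = \mathrm{tr}(Z) = 1$ and $\mathrm{tr}(XZ^*) = 0$. Then $\|X\|^2\|Z\|^2 \geq \frac{1}{m}(\|X\|^2 + \|Z\|^2)$, where $\|X\|^2 = \mathrm{tr}(XX^*)$. -/

import Mathlib

open Matrix

theorem frobenius_trace_one_orthogonal (m : ℕ) (hm : 0 < m)
    (X Z : Matrix (Fin m) (Fin m) ℝ)
    (hX : trace X = 1) (hZ : trace Z = 1) (hXZ : trace (X * Zᵀ) = 0) :
    trace (X * Xᵀ) * trace (Z * Zᵀ) ≥ (1 / (m : ℝ)) * (trace (X * Xᵀ) + trace (Z * Zᵀ)) := by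
  have key : ∀ A : Matrix (Fin m) (Fin m) ℝ, 0 ≤ trace (A * Aᵀ) := by
    intro A
    rw [Matrix.trace]
    apply Finset.sum_nonneg
    intro i _
    simp only [Matrix.diag_apply, Matrix.mul_apply, Matrix.transpose_apply]
    exact Finset.sum_nonneg fun j _ => mul_self_nonneg _
  have zeroA : ∀ A : Matrix (Fin m) (Fin m) ℝ, trace (A * Aᵀ) = 0 → A = 0 := by
    intro A hA
    ext i j
    have h : ∑ i, ∑ j, A i j * A i j = 0 := by
      simpa [Matrix.trace, Matrix.diag_apply, Matrix.mul_apply] using hA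
    have h1 := (Finset.sum_eq_zero_iff_of_nonneg (fun i _ =>
      Finset.sum_nonneg fun j _ => mul_self_nonneg (A i j))).mp h i (Finset.mem_univ i)
    have h2 := (Finset.sum_eq_zero_iff_of_nonneg (fun j _ =>
      mul_self_nonneg (A i j))).mp h1 j (Finset.mem_univ j)
    simpa using mul_self_eq_zero.mp h2
  set a := trace (X * Xᵀ) with ha_def
  set b := trace (Z * Zᵀ) with hb_def
  have ha : 0 < a := by
    rcases lt_or_eq_of_le (key X) with h | h
    · exact h
    · exfalso
      have := zeroA X h.symm
      rw [this] at hX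
      simp at hX
  have hb : 0 < b := by
    rcases lt_or_eq_of_le (key Z) with h | h
    · exact h
    · exfalso
      have := zeroA Z h.symm
      rw [this] at hZ
      simp at hZ
  have hZX : trace (Z * Xᵀ) = 0 := by
    rw [← Matrix.trace_transpose (Z * Xᵀ), Matrix.transpose_mul, Matrix.transpose_transpose]
    exact hXZ
  set W : Matrix (Fin m) (Fin m) ℝ := (1 : Matrix (Fin m) (Fin m) ℝ) - a⁻¹ • X - b⁻¹ • Z with hW
  have hWexp : trace (W * Wᵀ) = (m : ℝ) - a⁻¹ - b⁻¹ := by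
    have hXt : trace Xᵀ = 1 := by rw [Matrix.trace_transpose]; exact hX
    have hZt : trace Zᵀ = 1 := by rw [Matrix.trace_transpose]; exact hZ
    simp only [hW, Matrix.sub_mul, Matrix.mul_sub, Matrix.transpose_sub, Matrix.transpose_smul,
      Matrix.transpose_one, Matrix.smul_mul, Matrix.mul_smul, Matrix.one_mul, Matrix.mul_one,
      trace_sub, trace_smul, trace_one, hX, hZ, hXt, hZt, hXZ, hZX, smul_eq_mul]
    rw [← ha_def, ← hb_def]
    field_simp
    rw [Fintype.card_fin]; ring
  have hW0 : (0:ℝ) ≤ (m : ℝ) - a⁻¹ - b⁻¹ := hWexp ▸ key W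
  have hai : a * a⁻¹ = 1 := mul_inv_cancel₀ ha.ne'
  have hbi : b * b⁻¹ = 1 := mul_inv_cancel₀ hb.ne'
  have hm' : (0:ℝ) < m := by exact_mod_cast hm
  rw [ge_iff_le, one_div, inv_mul_le_iff₀ hm']
  nlinarith [mul_nonneg (mul_nonneg (le_of_lt ha) (le_of_lt hb)) hW0, mul_pos ha hb]
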